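/- Let ε ∈ {1, −1}. Let S₁ be n₁×n₁, S₂ be n₂×n₂, U₁ be m×n₁, V₁ be n₁×m, A be n₂×n₁, B be n₁×n₂ complex matrices with A S₁ = S₂ A and S₁* B = B S₂*, and let K₁ be an n₁×n₁ matrix solving S₁ K₁ + K₁ S₁* = V₁ U₁. Set U = [U₁ U₁B] (m×(n₁+n₂)), V = [V₁; A V₁] ((n₁+n₂)×m), and let K be the (n₁+n₂)×(n₁+n₂) block matrix with blocks K₁, K₁B, AK₁, AK₁B (which solves S K + K S* = V U for S = blockdiag(S₁,S₂)). For (x,t) ∈ ℝ² set Ξ₁(x,t) = exp(−x S₁ − i t S₁²), Ξ₂(x,t) = exp(−x S₂ − i t S₂²), Ξ = blockdiag(Ξ₁, Ξ₂), and assume C = I + B* A is invertible; set Ξ̃₁ = Ξ₁ C. Then for every (x,t) ∈ ℝ² at which Ξ(x,t)*⁻¹ − ε K* Ξ(x,t) K and Ξ̃₁(x,t)*⁻¹ − ε K₁* Ξ̃₁(x,t) K₁ are invertible, U (Ξ*⁻¹ − ε K* Ξ K)⁻¹ V* = U₁ (Ξ̃₁*⁻¹ − ε K₁* Ξ̃₁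 K₁)⁻¹ V₁*; i.e., the NLS solution determined by the superposed data coincides with the one determined by the data (S₁, U₁ C, V₁). -/

import Mathlib

open Matrix

/-- Entrywise complex conjugate of a matrix. -/
def mconj {a b : Type*} (A : Matrix a b ℂ) : Matrix a b ℂ :=
  A.map (starRingEnd ℂ)

private lemma mconj_mul {a b c : Type*} [Fintype b] (M : Matrix a b ℂ) (N : Matrix b c ℂ) :
    mconj (M * N) = mconj M * mconj N := Matrix.map_mul

private lemma mconj_one {a : Type*} [DecidableEq a] : mconj (1 : Matrix a a ℂ) = 1 :=
  Matrix.map_one _ (map_zero _) (map_one _)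

private lemma mconj_zero {a b : Type*} : mconj (0 : Matrix a b ℂ) = 0 := Matrix.map_zero _ (map_zero _)

private lemma mconj_mconj {a b : Type*} (M : Matrix a b ℂ) : mconj (mconj M) = M := by
  ext i j; simp [mconj]

private lemma mconj_add {a b : Type*} (M N : Matrix a b ℂ) : mconj (M + N) = mconj M + mconj N := by
  ext i j; simp [mconj]

private lemma mconj_sub {a b : Type*} (M N : Matrix a b ℂ) : mconj (M - N) = mconj M - mconj N := by
  ext i j; simp [mconj]

private lemma mconj_smul {a b : Type*} (c : ℂ) (M : Matrix a b ℂ) :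
    mconj (c • M) = (starRingEnd ℂ c) • mconj M := by
  ext i j; simp [mconj]

private lemma mconj_fromRows {a b c : Type*} (M : Matrix a c ℂ) (N : Matrix b c ℂ) :
    mconj (fromRows M N) = fromRows (mconj M) (mconj N) := by
  ext (i|i) j <;> simp [mconj, Matrix.fromRows_apply_inl, Matrix.fromRows_apply_inr]

private lemma mconj_fromCols {a b c : Type*} (M : Matrix c a ℂ) (N : Matrix c b ℂ) :
    mconj (fromCols M N) = fromCols (mconj M) (mconj N) := by
  ext i (j|j) <;> simp [mconj, Matrix.fromCols_apply_inl, Matrix.fromCols_apply_inr]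

private lemma mconj_fromBlocks {a b c d : Type*} (A : Matrix a b ℂ) (B : Matrix a c ℂ)
    (C : Matrix d b ℂ) (D : Matrix d c ℂ) :
    mconj (fromBlocks A B C D) = fromBlocks (mconj A) (mconj B) (mconj C) (mconj D) :=
  Matrix.fromBlocks_map A B C D _

private lemma mconj_isUnit {a : Type*} [Fintype a] [DecidableEq a] {M : Matrix a a ℂ}
    (h : IsUnit M) : IsUnit (mconj M) := by
  have : mconj M = (RingHom.mapMatrix (starRingEnd ℂ)) M := rfl
  rw [this]; exact h.map _

private lemma mconj_eq {a b : Type*} (M : Matrix a b ℂ) : mconj M = (Mᴴ)ᵀ := by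
  ext i j; simp [mconj]

private lemma mconj_exp {p : Type*} [Fintype p] [DecidableEq p] (X : Matrix p p ℂ) :
    mconj (NormedSpace.exp X) = NormedSpace.exp (mconj X) := by
  rw [mconj_eq, mconj_eq, ← Matrix.exp_conjTranspose, ← Matrix.exp_transpose]

private lemma exp_mul_exp_neg' {p : Type*} [Fintype p] [DecidableEq p] (X : Matrix p p ℂ) :
    NormedSpace.exp X * NormedSpace.exp (-X) = 1 := by
  rw [← Matrix.exp_add_of_commute X (-X) (Commute.refl X).neg_right, add_neg_cancel,
    NormedSpace.exp_zero]

private lemma exp_neg_mul_exp' {p : Type*} [Fintype p] [DecidableEq p] (X : Matrix p p ℂ) :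
    NormedSpace.exp (-X) * NormedSpace.exp X = 1 := by
  rw [← Matrix.exp_add_of_commute (-X) X (Commute.refl X).neg_left, neg_add_cancel,
    NormedSpace.exp_zero]

private lemma intertwine_exp {p q : Type*} [Fintype p] [Fintype q] [DecidableEq p] [DecidableEq q]
    (A : Matrix q p ℂ) (X : Matrix p p ℂ) (Y : Matrix q q ℂ) (h : A * X = Y * A) :
    A * NormedSpace.exp X = NormedSpace.exp Y * A := by
  letI : SeminormedRing (Matrix p p ℂ) := Matrix.linftyOpSemiNormedRing
  letI : NormedRing (Matrix p p ℂ) := Matrix.linftyOpNormedRing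
  letI : NormedAlgebra ℂ (Matrix p p ℂ) := Matrix.linftyOpNormedAlgebra
  letI : SeminormedRing (Matrix q q ℂ) := Matrix.linftyOpSemiNormedRing
  letI : NormedRing (Matrix q q ℂ) := Matrix.linftyOpNormedRing
  letI : NormedAlgebra ℂ (Matrix q q ℂ) := Matrix.linftyOpNormedAlgebra
  have hpow : ∀ n : ℕ, A * X ^ n = Y ^ n * A := by
    intro n; induction n with
    | zero => simp
    | succ n ih =>
      rw [pow_succ, ← Matrix.mul_assoc, ih, Matrix.mul_assoc, h, ← Matrix.mul_assoc, ← pow_succ]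
  have hL : Continuous fun M : Matrix p p ℂ => A * M :=
    continuous_const.matrix_mul continuous_id
  have hR : Continuous fun M : Matrix q q ℂ => M * A :=
    continuous_id.matrix_mul continuous_const
  let L : Matrix p p ℂ →L[ℂ] Matrix q p ℂ :=
    ⟨{ toFun := fun M => A * M, map_add' := fun M N => Matrix.mul_add A M N,
       map_smul' := fun c M => by simp [Matrix.mul_smul] }, hL⟩
  let R : Matrix q q ℂ →L[ℂ] Matrix q p ℂ :=
    ⟨{ toFun := fun M => M * A, map_add' := fun M N => Matrix.add_mul M N A,
       map_smul' := fun c M => by simp [Matrix.smul_mul] }, hR⟩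
  have h1 : A * NormedSpace.exp X = L (NormedSpace.exp X) := rfl
  have h2 : NormedSpace.exp Y * A = R (NormedSpace.exp Y) := rfl
  rw [h1, h2, NormedSpace.exp_eq_tsum ℂ, NormedSpace.exp_eq_tsum ℂ]
  rw [L.map_tsum (NormedSpace.expSeries_summable' (𝕂 := ℂ) X), R.map_tsum (NormedSpace.expSeries_summable' (𝕂 := ℂ) Y)]
  congr 1; funext n
  show A * (((n.factorial : ℕ) : ℂ)⁻¹ • X ^ n) = (((n.factorial : ℕ) : ℂ)⁻¹ • Y ^ n) * A
  rw [Matrix.mul_smul, Matrix.smul_mul, hpow n]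

private lemma intertwine_sub {p q : Type*} [Fintype p] [Fintype q]
    (A : Matrix q p ℂ) (S : Matrix p p ℂ) (T : Matrix q q ℂ) (h : A * S = T * A) (a b : ℂ) :
    A * (a • S - b • (S * S)) = (a • T - b • (T * T)) * A := by
  have h2 : A * (S * S) = T * T * A := by
    rw [← Matrix.mul_assoc, h, Matrix.mul_assoc, h, ← Matrix.mul_assoc]
  rw [Matrix.mul_sub, Matrix.sub_mul, Matrix.mul_smul, Matrix.mul_smul, Matrix.smul_mul,
    Matrix.smul_mul, h, h2]

private lemma mconj_poly {p : Type*} [Fintype p] (S : Matrix p p ℂ) (a b : ℂ) :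
    mconj (a • S - b • (S * S)) =
      (starRingEnd ℂ a) • mconj S - (starRingEnd ℂ b) • (mconj S * mconj S) := by
  rw [mconj_sub, mconj_smul, mconj_smul, mconj_mul]

/-- Superposition with similar data reduces to a redefinition of `U₁`:
the NLS solution determined by the superposed data coincides with the one
determined by the data `(S₁, U₁ C, V₁)`. -/
theorem superposition_of_similar_data
    {n1 n2 m : ℕ}
    (ε : ℂ) (hε : ε = 1 ∨ ε = -1)
    (S1 : Matrix (Fin n1) (Fin n1) ℂ) (S2 : Matrix (Fin n2) (Fin n2) ℂ)
    (U1 : Matrix (Fin m) (Fin n1) ℂ) (V1 : Matrix (Fin n1) (Fin m) ℂ)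
    (A : Matrix (Fin n2) (Fin n1) ℂ) (B : Matrix (Fin n1) (Fin n2) ℂ)
    (hA : A * S1 = S2 * A)
    (hB : mconj S1 * B = B * mconj S2)
    (K1 : Matrix (Fin n1) (Fin n1) ℂ)
    (hK1 : S1 * K1 + K1 * mconj S1 = V1 * U1)
    (U : Matrix (Fin m) (Fin n1 ⊕ Fin n2) ℂ)
    (hU : U = fromCols U1 (U1 * B))
    (V : Matrix (Fin n1 ⊕ Fin n2) (Fin m) ℂ)
    (hV : V = fromRows V1 (A * V1))
    (K : Matrix (Fin n1 ⊕ Fin n2) (Fin n1 ⊕ Fin n2) ℂ)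
    (hKblocks : K = fromBlocks K1 (K1 * B) (A * K1) (A * K1 * B))
    (Ξ1 : ℝ → ℝ → Matrix (Fin n1) (Fin n1) ℂ)
    (Ξ2 : ℝ → ℝ → Matrix (Fin n2) (Fin n2) ℂ)
    (hΞ1 : ∀ x t : ℝ,
      Ξ1 x t = NormedSpace.exp ((-(x : ℂ)) • S1 - (Complex.I * t) • (S1 * S1)))
    (hΞ2 : ∀ x t : ℝ,
      Ξ2 x t = NormedSpace.exp ((-(x : ℂ)) • S2 - (Complex.I * t) • (S2 * S2)))
    (Ξ : ℝ → ℝ → Matrix (Fin n1 ⊕ Fin n2) (Fin n1 ⊕ Fin n2) ℂ)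
    (hΞ : ∀ x t : ℝ, Ξ x t = fromBlocks (Ξ1 x t) 0 0 (Ξ2 x t))
    (C : Matrix (Fin n1) (Fin n1) ℂ)
    (hC : C = 1 + mconj B * A)
    (hCinv : IsUnit C)
    (Ξt1 : ℝ → ℝ → Matrix (Fin n1) (Fin n1) ℂ)
    (hΞt1 : ∀ x t : ℝ, Ξt1 x t = Ξ1 x t * C) :
    ∀ x t : ℝ,
      IsUnit ((mconj (Ξ x t))⁻¹ - ε • (mconj K * Ξ x t * K)) →
      IsUnit ((mconj (Ξt1 x t))⁻¹ - ε • (mconj K1 * Ξt1 x t * K1)) →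
      U * ((mconj (Ξ x t))⁻¹ - ε • (mconj K * Ξ x t * K))⁻¹ * mconj V
        = U1 * ((mconj (Ξt1 x t))⁻¹ - ε • (mconj K1 * Ξt1 x t * K1))⁻¹ * mconj V1 := by
  intro x t hM hN
  -- conjugated intertwining relations
  have hBbar : S1 * mconj B = mconj B * S2 := by
    have h := congrArg mconj hB
    rwa [mconj_mul, mconj_mul, mconj_mconj, mconj_mconj] at h
  have hAbar : mconj A * mconj S1 = mconj S2 * mconj A := by
    have h := congrArg mconj hA
    rwa [mconj_mul, mconj_mul] at h
  -- abbreviations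
  set E1 := Ξ1 x t with hE1set
  set E2 := Ξ2 x t with hE2set
  set E := Ξ x t with hEset
  set Et1 := Ξt1 x t with hEt1set
  set P : Matrix (Fin n1) (Fin n1 ⊕ Fin n2) ℂ := fromCols 1 B with hP
  set Q : Matrix (Fin n1 ⊕ Fin n2) (Fin n1) ℂ := fromRows 1 A with hQ
  set X1 : Matrix (Fin n1) (Fin n1) ℂ :=
    (-(x : ℂ)) • S1 - (Complex.I * t) • (S1 * S1) with hX1
  set X2 : Matrix (Fin n2) (Fin n2) ℂ :=
    (-(x : ℂ)) • S2 - (Complex.I * t) • (S2 * S2) with hX2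
  set G1 : Matrix (Fin n1) (Fin n1) ℂ := NormedSpace.exp (-(mconj X1)) with hG1
  set G2 : Matrix (Fin n2) (Fin n2) ℂ := NormedSpace.exp (-(mconj X2)) with hG2
  have hE1exp : E1 = NormedSpace.exp X1 := hΞ1 x t
  have hE2exp : E2 = NormedSpace.exp X2 := hΞ2 x t
  have hEt1 : Et1 = E1 * C := hΞt1 x t
  have hEblocks : E = fromBlocks E1 0 0 E2 := hΞ x t
  -- units
  have hCu : IsUnit (mconj C) := mconj_isUnit hCinv
  have hCdet : IsUnit (mconj C).det := (Matrix.isUnit_iff_isUnit_det _).mp hCu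
  have hCC : mconj C * (mconj C)⁻¹ = 1 := Matrix.mul_nonsing_inv _ hCdet
  have hCC' : (mconj C)⁻¹ * mconj C = 1 := Matrix.nonsing_inv_mul _ hCdet
  have hMdet : IsUnit ((mconj E)⁻¹ - ε • (mconj K * E * K)).det :=
    (Matrix.isUnit_iff_isUnit_det _).mp hM
  have hNdet : IsUnit ((mconj Et1)⁻¹ - ε • (mconj K1 * Et1 * K1)).det :=
    (Matrix.isUnit_iff_isUnit_det _).mp hN
  -- exponentials and their inverses
  have hmE1 : mconj E1 = NormedSpace.exp (mconj X1) := by rw [hE1exp, mconj_exp]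
  have hmE2 : mconj E2 = NormedSpace.exp (mconj X2) := by rw [hE2exp, mconj_exp]
  have hE1G1 : mconj E1 * G1 = 1 := by rw [hmE1, hG1]; exact exp_mul_exp_neg' _
  have hE2G2 : mconj E2 * G2 = 1 := by rw [hmE2, hG2]; exact exp_mul_exp_neg' _
  -- intertwining with exponentials
  have hBE : mconj B * E2 = E1 * mconj B := by
    rw [hE1exp, hE2exp, hX1, hX2]
    exact intertwine_exp _ _ _ (intertwine_sub _ _ _ hBbar.symm _ _)
  have hAX : mconj A * mconj X1 = mconj X2 * mconj A := by
    have h1 := intertwine_sub (mconj A) (mconj S1) (mconj S2) hAbar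
      (starRingEnd ℂ (-(x : ℂ))) (starRingEnd ℂ (Complex.I * t))
    rw [← mconj_poly, ← mconj_poly] at h1
    rw [hX1, hX2]; exact h1
  have hAG : mconj A * G1 = G2 * mconj A := by
    rw [hG1, hG2]
    exact intertwine_exp _ _ _ (by rw [Matrix.mul_neg, Matrix.neg_mul, hAX])
  -- C-commutation
  have hmC : mconj C = 1 + B * mconj A := by
    rw [hC, mconj_add, mconj_one, mconj_mul, mconj_mconj]
  have hBAS : B * mconj A * mconj S1 = mconj S1 * (B * mconj A) := by
    calc B * mconj A * mconj S1 = B * (mconj A * mconj S1) := Matrix.mul_assoc _ _ _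
      _ = B * (mconj S2 * mconj A) := by rw [hAbar]
      _ = B * mconj S2 * mconj A := (Matrix.mul_assoc _ _ _).symm
      _ = mconj S1 * B * mconj A := by rw [← hB]
      _ = mconj S1 * (B * mconj A) := Matrix.mul_assoc _ _ _
  have hCS : mconj C * mconj S1 = mconj S1 * mconj C := by
    rw [hmC, Matrix.add_mul, Matrix.mul_add, Matrix.one_mul, Matrix.mul_one, hBAS]
  have hCX : mconj C * mconj X1 = mconj X1 * mconj C := by
    have h1 := intertwine_sub (mconj C) (mconj S1) (mconj S1) hCS
      (starRingEnd ℂ (-(x : ℂ))) (starRingEnd ℂ (Complex.I * t))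
    rw [← mconj_poly] at h1
    rw [hX1]; exact h1
  have hCG : mconj C * G1 = G1 * mconj C := by
    rw [hG1]
    exact intertwine_exp _ _ _ (by rw [Matrix.mul_neg, Matrix.neg_mul, hCX])
  -- inverse of mconj Et1
  have hNinvEq : (mconj Et1)⁻¹ = G1 * (mconj C)⁻¹ := by
    apply Matrix.inv_eq_right_inv
    rw [hEt1, mconj_mul, Matrix.mul_assoc, ← Matrix.mul_assoc (mconj C) G1 ((mconj C)⁻¹),
      hCG, Matrix.mul_assoc G1 (mconj C) ((mconj C)⁻¹), hCC, Matrix.mul_one, hE1G1]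
  -- inverse of mconj E
  have hmE : mconj E = fromBlocks (mconj E1) 0 0 (mconj E2) := by
    rw [hEblocks, mconj_fromBlocks, mconj_zero, mconj_zero]
  have hEinv : (mconj E)⁻¹ = fromBlocks G1 0 0 G2 := by
    apply Matrix.inv_eq_right_inv
    rw [hmE, Matrix.fromBlocks_multiply]
    simp [hE1G1, hE2G2]
  -- block factorizations
  have hK : K = Q * K1 * P := by
    rw [hKblocks, hP, hQ, Matrix.fromRows_mul, Matrix.fromRows_mul_fromCols]
    simp [Matrix.mul_assoc]
  have hU' : U = U1 * P := by rw [hU, hP, Matrix.mul_fromCols, Matrix.mul_one]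
  have hV' : V = Q * V1 := by rw [hV, hQ, Matrix.fromRows_mul, Matrix.one_mul]
  have hmQ : mconj Q = fromRows 1 (mconj A) := by rw [hQ, mconj_fromRows, mconj_one]
  have hmP : mconj P = fromCols 1 (mconj B) := by rw [hP, mconj_fromCols, mconj_one]
  have hPQ : P * mconj Q = mconj C := by
    rw [hP, hmQ, Matrix.fromCols_mul_fromRows, Matrix.one_mul, hmC]
  have hEQ : E * Q = fromRows E1 (E2 * A) := by
    rw [hEblocks, hQ, Matrix.fromBlocks_mul_fromRows]
    simp
  have hPEQ : mconj P * E * Q = Et1 := by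
    rw [Matrix.mul_assoc, hEQ, hmP, Matrix.fromCols_mul_fromRows, Matrix.one_mul,
      ← Matrix.mul_assoc, hBE, hEt1, hC, Matrix.mul_add, Matrix.mul_one, ← Matrix.mul_assoc]
  have hEinvQ : (mconj E)⁻¹ * mconj Q = mconj Q * G1 := by
    rw [hEinv, hmQ, Matrix.fromBlocks_mul_fromRows, Matrix.fromRows_mul]
    simp [← hAG]
  -- the key computation
  have hKm : mconj K = mconj Q * mconj K1 * mconj P := by rw [hK, mconj_mul, mconj_mul]
  have hmid : mconj K * E * K = mconj Q * (mconj K1 * Et1 * K1) * P := by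
    rw [hKm, hK, ← hPEQ]
    simp only [Matrix.mul_assoc]
  have hMQ : ((mconj E)⁻¹ - ε • (mconj K * E * K)) * mconj Q
      = mconj Q * (((mconj Et1)⁻¹ - ε • (mconj K1 * Et1 * K1)) * mconj C) := by
    rw [Matrix.sub_mul, Matrix.sub_mul, Matrix.mul_sub, hEinvQ, Matrix.smul_mul, hmid,
      hNinvEq]
    congr 1
    · rw [Matrix.mul_assoc G1 ((mconj C)⁻¹) (mconj C), hCC', Matrix.mul_one]
    · rw [Matrix.smul_mul, Matrix.mul_smul, ← hPQ]
      congr 1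
      simp only [Matrix.mul_assoc]
  -- invert
  have h4 : ((mconj E)⁻¹ - ε • (mconj K * E * K))
      * (mconj Q * ((mconj C)⁻¹ * ((mconj Et1)⁻¹ - ε • (mconj K1 * Et1 * K1))⁻¹))
      = mconj Q := by
    rw [← Matrix.mul_assoc, hMQ, Matrix.mul_assoc]
    have h1 : ((mconj Et1)⁻¹ - ε • (mconj K1 * Et1 * K1)) * mconj C
        * ((mconj C)⁻¹ * ((mconj Et1)⁻¹ - ε • (mconj K1 * Et1 * K1))⁻¹) = 1 := by
      rw [Matrix.mul_assoc, ← Matrix.mul_assoc (mconj C), hCC, Matrix.one_mul,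
        Matrix.mul_nonsing_inv _ hNdet]
    rw [h1, Matrix.mul_one]
  have h5 : ((mconj E)⁻¹ - ε • (mconj K * E * K))⁻¹ * mconj Q
      = mconj Q * ((mconj C)⁻¹ * ((mconj Et1)⁻¹ - ε • (mconj K1 * Et1 * K1))⁻¹) := by
    conv_lhs => rw [← h4]
    rw [← Matrix.mul_assoc, Matrix.nonsing_inv_mul _ hMdet, Matrix.one_mul]
  have h6 : P * (((mconj E)⁻¹ - ε • (mconj K * E * K))⁻¹ * mconj Q)
      = ((mconj Et1)⁻¹ - ε • (mconj K1 * Et1 * K1))⁻¹ := by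
    rw [h5, ← Matrix.mul_assoc, hPQ, ← Matrix.mul_assoc, hCC, Matrix.one_mul]
  -- conclude
  rw [hU', hV', mconj_mul]
  calc U1 * P * ((mconj E)⁻¹ - ε • (mconj K * E * K))⁻¹ * (mconj Q * mconj V1)
      = U1 * (P * (((mconj E)⁻¹ - ε • (mconj K * E * K))⁻¹ * mconj Q)) * mconj V1 := by
        simp only [Matrix.mul_assoc]
    _ = U1 * ((mconj Et1)⁻¹ - ε • (mconj K1 * Et1 * K1))⁻¹ * mconj V1 := by rw [h6]
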